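/- Let q > 1 be a real number and α a nonzero complex number such that α ≠ ±q^{1/2}, α² ≠ q and α^{-2} ≠ q. Set λ = q^{1/2}(α + α^{-1}) and define, for ε ∈ {1, -1}, κ_ε = (2(1+q^{-1}))^{-1} · (1 - α²q^{-1})(1 - q^{-1})(1 - α^{-2}q^{-1}) / ((1 - ε α q^{-1/2})(1 - ε α^{-1} q^{-1/2})), and κ_ram = (2(1+q^{-1}))^{-1} · (1 - α²q^{-1})(1 - q^{-1})(1 - α^{-2}q^{-1}). Then κ_{+1} + κ_{-1} + 2·κ_ram/q = 1 - q^{-3} - ((q-1)/(q+1))·q^{-3}·λ². -/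

import Mathlib

set_option maxHeartbeats 2000000 in
theorem stmt2 (q : ℝ) (hq : 1 < q) (α : ℂ) (hα0 : α ≠ 0)
    (h1 : α ≠ (Real.sqrt q : ℂ)) (h2 : α ≠ -(Real.sqrt q : ℂ))
    (h3 : α ^ 2 ≠ (q : ℂ)) (h4 : (α⁻¹) ^ 2 ≠ (q : ℂ)) :
    let lam : ℂ := (Real.sqrt q : ℂ) * (α + α⁻¹)
    let κ : ℂ → ℂ := fun ε =>
      (2 * (1 + (q : ℂ)⁻¹))⁻¹ *
        ((1 - α ^ 2 * (q : ℂ)⁻¹) * (1 - (q : ℂ)⁻¹) * (1 - (α⁻¹) ^ 2 * (q : ℂ)⁻¹)) /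
        ((1 - ε * α * ((Real.sqrt q : ℂ))⁻¹) * (1 - ε * α⁻¹ * ((Real.sqrt q : ℂ))⁻¹))
    let κram : ℂ :=
      (2 * (1 + (q : ℂ)⁻¹))⁻¹ *
        ((1 - α ^ 2 * (q : ℂ)⁻¹) * (1 - (q : ℂ)⁻¹) * (1 - (α⁻¹) ^ 2 * (q : ℂ)⁻¹))
    κ 1 + κ (-1) + 2 * κram / (q : ℂ) =
      1 - (q : ℂ)⁻¹ ^ 3 - (((q : ℂ) - 1) / ((q : ℂ) + 1)) * (q : ℂ)⁻¹ ^ 3 * lam ^ 2 := by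
  intro lam κ κram
  set s : ℂ := (Real.sqrt q : ℂ) with hs
  have hq0 : (0:ℝ) < q := lt_trans one_pos hq
  have hs2 : s ^ 2 = (q : ℂ) := by
    rw [hs]; norm_cast; exact Real.sq_sqrt hq0.le
  have hs0 : s ≠ 0 := by
    rw [hs]; exact_mod_cast (Real.sqrt_pos.mpr hq0).ne'
  have hq0' : (q : ℂ) ≠ 0 := by rw [← hs2]; exact pow_ne_zero 2 hs0
  have hs21 : s ^ 2 + 1 ≠ 0 := by
    rw [hs2]
    intro h
    have : (q : ℝ) = -1 := by exact_mod_cast eq_neg_of_add_eq_zero_left h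
    linarith
  have hA : s - α ≠ 0 := by
    intro h; exact h1 (by linear_combination -h)
  have hB : s + α ≠ 0 := by
    intro h; exact h2 (by linear_combination h)
  have hC : α * s - 1 ≠ 0 := by
    intro h
    apply h4
    rw [← hs2]
    field_simp
    linear_combination (-1) * (α * s + 1) * h
  have hD : α * s + 1 ≠ 0 := by
    intro h
    apply h4
    rw [← hs2]
    field_simp
    linear_combination (-1) * (α * s - 1) * h
  have hs21' : 1 + (s ^ 2 : ℂ)⁻¹ ≠ 0 := by
    intro h; apply hs21; field_simp at h; linear_combination h
  have hd1 : 1 - α * s⁻¹ ≠ 0 := by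
    intro h; apply hA; field_simp at h; linear_combination h
  have hd2 : 1 - α⁻¹ * s⁻¹ ≠ 0 := by
    intro h; apply hC; field_simp at h; linear_combination h
  have hd3 : 1 + α * s⁻¹ ≠ 0 := by
    intro h; apply hB; field_simp at h; linear_combination h
  have hd4 : 1 + α⁻¹ * s⁻¹ ≠ 0 := by
    intro h; apply hD; field_simp at h; linear_combination h
  have h22 : (2 * s ^ 2 + 2 : ℂ) ≠ 0 := by
    intro h; apply hs21; linear_combination h / 2
  have e0 : (2 * (1 + ((s : ℂ) ^ 2)⁻¹))⁻¹ = s ^ 2 / (2 * s ^ 2 + 2) := by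
    have h' : (2:ℂ) * (1 + (s ^ 2)⁻¹) = (2 * s ^ 2 + 2) * (s ^ 2)⁻¹ := by
      field_simp
    rw [h', mul_inv, inv_inv, mul_comm, div_eq_mul_inv]
  have hlam : α + α⁻¹ = (α ^ 2 + 1) / α := by
    field_simp
  have K1 : 2 * κ 1 = (s+α)*(α*s+1)*(s^2-1)/((s^2+1)*α*s^2) := by
    show 2 * ((2 * (1 + (q : ℂ)⁻¹))⁻¹ *
        ((1 - α ^ 2 * (q : ℂ)⁻¹) * (1 - (q : ℂ)⁻¹) * (1 - (α⁻¹) ^ 2 * (q : ℂ)⁻¹)) /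
        ((1 - 1 * α * s⁻¹) * (1 - 1 * α⁻¹ * s⁻¹))) = _
    rw [← hs2, one_mul, one_mul, mul_div_assoc', e0,
      div_eq_div_iff (mul_ne_zero hd1 hd2) (by simp [hs0, hα0, hs21, mul_eq_zero])]
    field_simp
    ring
  have K2 : 2 * κ (-1) = (s-α)*(α*s-1)*(s^2-1)/((s^2+1)*α*s^2) := by
    show 2 * ((2 * (1 + (q : ℂ)⁻¹))⁻¹ *
        ((1 - α ^ 2 * (q : ℂ)⁻¹) * (1 - (q : ℂ)⁻¹) * (1 - (α⁻¹) ^ 2 * (q : ℂ)⁻¹)) /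
        ((1 - (-1) * α * s⁻¹) * (1 - (-1) * α⁻¹ * s⁻¹))) = _
    have hd3' : 1 - (-1) * α * s⁻¹ ≠ 0 := by simpa using hd3
    have hd4' : 1 - (-1) * α⁻¹ * s⁻¹ ≠ 0 := by simpa using hd4
    rw [← hs2, mul_div_assoc', e0,
      div_eq_div_iff (mul_ne_zero hd3' hd4') (by simp [hs0, hα0, hs21, mul_eq_zero])]
    field_simp
    ring
  have K3 : 2 * κram = (s-α)*(s+α)*(s^2-1)*(α*s-1)*(α*s+1)/((s^2+1)*α^2*s^4) := by
    show 2 * ((2 * (1 + (q : ℂ)⁻¹))⁻¹ *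
        ((1 - α ^ 2 * (q : ℂ)⁻¹) * (1 - (q : ℂ)⁻¹) * (1 - (α⁻¹) ^ 2 * (q : ℂ)⁻¹))) = _
    rw [← hs2, e0, eq_div_iff (by simp [hs0, hα0, hs21, mul_eq_zero])]
    field_simp
    ring
  apply mul_left_cancel₀ (two_ne_zero (α := ℂ))
  have expand : (2:ℂ) * (κ 1 + κ (-1) + 2 * κram / (q : ℂ)) =
      2 * κ 1 + 2 * κ (-1) + 2 * (2 * κram) / (q : ℂ) := by ring
  rw [expand, K1, K2, K3, ← hs2]
  show _ = 2 * (1 - ((s:ℂ)^2)⁻¹ ^ 3 - (((s:ℂ)^2 - 1) / ((s:ℂ)^2 + 1)) * ((s:ℂ)^2)⁻¹ ^ 3 *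
    (s * (α + α⁻¹)) ^ 2)
  rw [hlam]
  field_simp
  ring
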